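/- Let H be a real Hilbert space. For each k ∈ ℕ let α_k ∈ (0,1], let T_k : H → H be α_k-averaged, let λ_k ∈ [0, 1/α_k], let η_k ≥ 0, and let e_k ∈ H. Assume C := ⋂_{k∈ℕ} Fix T_k is nonempty. Let x_0 ∈ H and define recursively x_{k+1} := (1−λ_k)x_k + λ_k·(T_k x_k) + η_k·e_k, and set y_k := (1−λ_k)x_k + λ_k·(T_k x_k). Then for every k ∈ ℕ and every p ∈ C with ‖x_k − p‖ = infDist(x_k, C): (infDist(x_{k+1}, C))² ≤ (infDist(x_k, C))² − λ_k·(1/α_k − λ_k)·‖x_k − T_k x_k‖² + η_k·‖e_k‖·(2·‖y_k − p‖ + η_k·‖e_k‖). -/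

import Mathlib

/-- Inexact non-stationary Krasnosel'skiĭ–Mann iterations: for `α_k`-averaged
operators `T_k` with common fixed point set intersection `C` nonempty,
`λ_k ∈ [0, 1/α_k]`, `η_k ≥ 0`, and `x_{k+1} = (1-λ_k)x_k + λ_k T_k x_k + η_k e_k`,
for every `k` and every nearest point `p` of `x_k` in `C`,
`d(x_{k+1},C)² ≤ d(x_k,C)² - λ_k(1/α_k - λ_k)‖x_k - T_k x_k‖²
  + η_k‖e_k‖(2‖y_k - p‖ + η_k‖e_k‖)` where `y_k := (1-λ_k)x_k + λ_k T_k x_k`. -/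
theorem stmt_14 {H : Type*} [NormedAddCommGroup H] [InnerProductSpace ℝ H] [CompleteSpace H]
    (α : ℕ → ℝ) (hα : ∀ k, α k ∈ Set.Ioc (0 : ℝ) 1)
    (T : ℕ → H → H)
    (hT : ∀ k, ∃ R : H → H, (∀ a b : H, ‖R a - R b‖ ≤ ‖a - b‖) ∧
      ∀ a : H, T k a = (1 - α k) • a + α k • R a)
    (lam η : ℕ → ℝ)
    (hlam : ∀ k, lam k ∈ Set.Icc (0 : ℝ) (1 / α k))
    (hη : ∀ k, 0 ≤ η k)
    (e : ℕ → H)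
    (C : Set H) (hC : C = ⋂ k, {w : H | T k w = w}) (hCne : C.Nonempty)
    (x : ℕ → H)
    (hx : ∀ k, x (k + 1) = (1 - lam k) • x k + lam k • T k (x k) + η k • e k)
    (y : ℕ → H)
    (hy : ∀ k, y k = (1 - lam k) • x k + lam k • T k (x k)) :
    ∀ k, ∀ p ∈ C, ‖x k - p‖ = Metric.infDist (x k) C →
      (Metric.infDist (x (k + 1)) C) ^ 2 ≤
        (Metric.infDist (x k) C) ^ 2
          - lam k * (1 / α k - lam k) * ‖x k - T k (x k)‖ ^ 2
          + η k * ‖e k‖ * (2 * ‖y k - p‖ + η k * ‖e k‖) := by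
  intro k p hp hnear
  obtain ⟨R, hRne, hTR⟩ := hT k
  have hα0 : 0 < α k := (hα k).1
  have hlam0 : 0 ≤ lam k := (hlam k).1
  have hlam1 : lam k ≤ 1 / α k := (hlam k).2
  -- p is a fixed point of T k, hence of R
  have hTp : T k p = p := by
    have := hp
    rw [hC] at this
    exact Set.mem_iInter.mp this k
  have hRp : R p = p := by
    have h1 : (1 - α k) • p + α k • R p = p := by rw [← hTR p, hTp]
    have h3 : α k • R p - α k • p = ((1 - α k) • p + α k • R p) - p := by
      rw [sub_smul, one_smul]; abel
    rw [h1, sub_self] at h3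
    exact smul_right_injective H (ne_of_gt hα0) (sub_eq_zero.mp h3)
  set u : H := x k - p with hu
  set v : H := x k - R (x k) with hv
  -- nonexpansive inequality
  have hkey : ‖v‖ ^ 2 ≤ 2 * inner ℝ u v := by
    have h1 : ‖R (x k) - p‖ ≤ ‖u‖ := by
      have := hRne (x k) p
      rwa [hRp] at this
    have h2 : u - v = R (x k) - p := by rw [hu, hv]; abel
    have h3 : ‖u - v‖ ^ 2 ≤ ‖u‖ ^ 2 := by
      rw [h2]
      exact pow_le_pow_left₀ (norm_nonneg _) h1 2
    have h4 : ‖u - v‖ ^ 2 = ‖u‖ ^ 2 - 2 * inner ℝ u v + ‖v‖ ^ 2 :=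
      norm_sub_sq_real u v
    nlinarith
  -- y k - p = u - (lam k * α k) • v
  have hyp : y k - p = u - (lam k * α k) • v := by
    rw [hy k, hTR (x k), hu, hv]
    module
  -- x k - T k (x k) = α k • v
  have hxT : x k - T k (x k) = α k • v := by
    rw [hTR (x k), hv]
    module
  -- norm of y k - p squared
  have hynorm : ‖y k - p‖ ^ 2 =
      ‖u‖ ^ 2 - 2 * (lam k * α k) * inner ℝ u v + (lam k * α k) ^ 2 * ‖v‖ ^ 2 := by
    rw [hyp, norm_sub_sq_real, real_inner_smul_right, norm_smul, Real.norm_eq_abs,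
      mul_pow, sq_abs]
    ring
  have hxTnorm : ‖x k - T k (x k)‖ ^ 2 = α k ^ 2 * ‖v‖ ^ 2 := by
    rw [hxT, norm_smul, mul_pow, Real.norm_eq_abs, sq_abs]
  -- key descent inequality
  have hdesc : ‖y k - p‖ ^ 2 ≤
      ‖u‖ ^ 2 - lam k * (1 / α k - lam k) * ‖x k - T k (x k)‖ ^ 2 := by
    rw [hynorm, hxTnorm]
    have hla : 0 ≤ lam k * α k := mul_nonneg hlam0 hα0.le
    have hla1 : lam k * α k ≤ 1 := by
      have := mul_le_mul_of_nonneg_right hlam1 hα0.le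
      rwa [one_div, inv_mul_cancel₀ hα0.ne'] at this
    have hcoef : lam k * (1 / α k - lam k) * (α k ^ 2 * ‖v‖ ^ 2)
        = (lam k * α k) * (1 - lam k * α k) * ‖v‖ ^ 2 := by
      field_simp
    rw [hcoef]
    nlinarith [mul_le_mul_of_nonneg_left hkey hla,
      mul_nonneg (mul_nonneg hla (sub_nonneg.mpr hla1)) (sq_nonneg ‖v‖)]
  -- x (k+1) = y k + η k • e k
  have hx1 : x (k + 1) = y k + η k • e k := by rw [hx k, hy k]
  have hd1 : Metric.infDist (x (k + 1)) C ≤ ‖x (k + 1) - p‖ := by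
    have := Metric.infDist_le_dist_of_mem hp (x := x (k + 1))
    rwa [dist_eq_norm] at this
  have hd2 : ‖x (k + 1) - p‖ ≤ ‖y k - p‖ + η k * ‖e k‖ := by
    calc ‖x (k + 1) - p‖ = ‖(y k - p) + η k • e k‖ := by rw [hx1]; congr 1; abel
      _ ≤ ‖y k - p‖ + ‖η k • e k‖ := norm_add_le _ _
      _ = ‖y k - p‖ + η k * ‖e k‖ := by
          rw [norm_smul, Real.norm_eq_abs, abs_of_nonneg (hη k)]
  have hd0 : 0 ≤ Metric.infDist (x (k + 1)) C := Metric.infDist_nonneg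
  have hd3 : Metric.infDist (x (k + 1)) C ^ 2 ≤ (‖y k - p‖ + η k * ‖e k‖) ^ 2 :=
    pow_le_pow_left₀ hd0 (hd1.trans hd2) 2
  rw [← hnear]
  nlinarith [hd3, hdesc]
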